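/- arXiv:2501.08938 — 2 statements merged into one kernel-verified Lean document; each statement's English description precedes it below -/
import Mathlib

section
/- Let T=(t_{ij}) be a proper quasi-transformation matrix of order m ≥ 2 and let Q_T be the quasi-copula satisfying T(Q_T)=Q_T. Then supp(Q_T) is a nonempty compact subset of [0,1]² satisfying supp(Q_T) = ⋃_{(i,j): t_{ij}≠0} ω_{ij}(supp(Q_T)), and supp(Q_T) = ⋂_{k≥0} W^k([0,1]²), where W(A) = ⋃_{(i,j): t_{ij}≠0} ω_{ij}(A); i.e., supp(Q_T) is the invariant set of the iterated function system {[0,1]²; (ω_{ij})_{t_{ij}≠0}}. -/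
open Set MeasureTheory

noncomputable section

/-- A (bivariate) quasi-copula on `[0,1]²`. -/
def IsQuasiCopula (Q : ℝ → ℝ → ℝ) : Prop :=
  (∀ u ∈ Icc (0:ℝ) 1, ∀ v ∈ Icc (0:ℝ) 1, Q u v ∈ Icc (0:ℝ) 1) ∧
  (∀ t ∈ Icc (0:ℝ) 1, Q t 0 = 0 ∧ Q 0 t = 0 ∧ Q t 1 = t ∧ Q 1 t = t) ∧
  (∀ v ∈ Icc (0:ℝ) 1, ∀ u₁ ∈ Icc (0:ℝ) 1, ∀ u₂ ∈ Icc (0:ℝ) 1, u₁ ≤ u₂ → Q u₁ v ≤ Q u₂ v) ∧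
  (∀ u ∈ Icc (0:ℝ) 1, ∀ v₁ ∈ Icc (0:ℝ) 1, ∀ v₂ ∈ Icc (0:ℝ) 1, v₁ ≤ v₂ → Q u v₁ ≤ Q u v₂) ∧
  (∀ u₁ ∈ Icc (0:ℝ) 1, ∀ v₁ ∈ Icc (0:ℝ) 1, ∀ u₂ ∈ Icc (0:ℝ) 1, ∀ v₂ ∈ Icc (0:ℝ) 1,
    |Q u₁ v₁ - Q u₂ v₂| ≤ |u₁ - u₂| + |v₁ - v₂|)

/-- The `Q`-volume of the rectangle `[u₁,u₂] × [v₁,v₂]`. -/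
def QVol (Q : ℝ → ℝ → ℝ) (u₁ u₂ v₁ v₂ : ℝ) : ℝ :=
  Q u₂ v₂ - Q u₂ v₁ - Q u₁ v₂ + Q u₁ v₁

/-- A copula: a quasi-copula all of whose rectangle volumes are nonnegative. -/
def IsCopula (C : ℝ → ℝ → ℝ) : Prop :=
  IsQuasiCopula C ∧
  ∀ u₁ u₂ v₁ v₂ : ℝ, u₁ ∈ Icc (0:ℝ) 1 → u₂ ∈ Icc (0:ℝ) 1 → v₁ ∈ Icc (0:ℝ) 1 →
    v₂ ∈ Icc (0:ℝ) 1 → u₁ ≤ u₂ → v₁ ≤ v₂ → 0 ≤ QVol C u₁ u₂ v₁ v₂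

/-- An interval of `[0,1]` which is open in the relative topology of `[0,1]`. -/
def IsRelOpenInterval (I : Set ℝ) : Prop :=
  I.OrdConnected ∧ ∃ U : Set ℝ, IsOpen U ∧ I = U ∩ Icc 0 1

/-- A rectangle `R = I₁ × I₂` (with `I₁, I₂` relatively open intervals of `[0,1]`) is
open `Q`-null if every closed rectangle contained in it has zero `Q`-volume. -/
def OpenQNull (Q : ℝ → ℝ → ℝ) (R : Set (ℝ × ℝ)) : Prop :=
  (∃ I₁ I₂ : Set ℝ, IsRelOpenInterval I₁ ∧ IsRelOpenInterval I₂ ∧ R = I₁ ×ˢ I₂) ∧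
  ∀ a₁ b₁ a₂ b₂ : ℝ, a₁ ≤ b₁ → a₂ ≤ b₂ → Icc a₁ b₁ ×ˢ Icc a₂ b₂ ⊆ R →
    QVol Q a₁ b₁ a₂ b₂ = 0

/-- The support of a quasi-copula: the complement in `[0,1]²` of the union of all
open `Q`-null rectangles. -/
def suppQ (Q : ℝ → ℝ → ℝ) : Set (ℝ × ℝ) :=
  (Icc (0:ℝ) 1 ×ˢ Icc (0:ℝ) 1) \ ⋃₀ {R | OpenQNull Q R}

/-- `p_k`: the sum of the entries of the first `k` columns of `T` (column index first). -/
def colPart {m : ℕ} (T : Fin m → Fin m → ℝ) (k : ℕ) : ℝ :=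
  ∑ i ∈ Finset.univ.filter (fun i : Fin m => (i : ℕ) < k), ∑ j, T i j

/-- `q_k`: the sum of the entries of the first `k` rows of `T` (rows ordered bottom-to-top). -/
def rowPart {m : ℕ} (T : Fin m → Fin m → ℝ) (k : ℕ) : ℝ :=
  ∑ j ∈ Finset.univ.filter (fun j : Fin m => (j : ℕ) < k), ∑ i, T i j

/-- A quasi-transformation matrix. -/
def IsQTMatrix {m : ℕ} (T : Fin m → Fin m → ℝ) : Prop :=
  (∑ i, ∑ j, T i j = 1) ∧
  (∀ i, 0 < ∑ j, T i j) ∧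
  (∀ j, 0 < ∑ i, T i j) ∧
  (∀ a b c d : ℕ, a ≤ b → b < m → c ≤ d → d < m →
    (a = 0 ∨ b = m - 1 ∨ c = 0 ∨ d = m - 1) →
    0 ≤ ∑ i ∈ Finset.univ.filter (fun i : Fin m => a ≤ (i : ℕ) ∧ (i : ℕ) ≤ b),
        ∑ j ∈ Finset.univ.filter (fun j : Fin m => c ≤ (j : ℕ) ∧ (j : ℕ) ≤ d), T i j)

/-- `F` is the `T`-transformation of the quasi-copula `Q`: on each associated rectangle
`R_{ij} = [p_{i-1},p_i] × [q_{j-1},q_j]` (here `i j : Fin m` are zero-based, so the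
rectangle is `[colPart T i, colPart T (i+1)] × [rowPart T j, rowPart T (j+1)]`),
`F` is given by the `T`-transformation formula. -/
def IsTTrans {m : ℕ} (T : Fin m → Fin m → ℝ) (Q F : ℝ → ℝ → ℝ) : Prop :=
  ∀ i j : Fin m, ∀ u v : ℝ,
    u ∈ Icc (colPart T (i : ℕ)) (colPart T ((i : ℕ) + 1)) →
    v ∈ Icc (rowPart T (j : ℕ)) (rowPart T ((j : ℕ) + 1)) →
    F u v =
      (∑ i' ∈ Finset.univ.filter (fun i' : Fin m => i' < i),
        ∑ j' ∈ Finset.univ.filter (fun j' : Fin m => j' < j), T i' j')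
      + (u - colPart T (i : ℕ)) / (colPart T ((i : ℕ) + 1) - colPart T (i : ℕ)) *
          (∑ j' ∈ Finset.univ.filter (fun j' : Fin m => j' < j), T i j')
      + (v - rowPart T (j : ℕ)) / (rowPart T ((j : ℕ) + 1) - rowPart T (j : ℕ)) *
          (∑ i' ∈ Finset.univ.filter (fun i' : Fin m => i' < i), T i' j)
      + T i j * Q ((u - colPart T (i : ℕ)) / (colPart T ((i : ℕ) + 1) - colPart T (i : ℕ)))
          ((v - rowPart T (j : ℕ)) / (rowPart T ((j : ℕ) + 1) - rowPart T (j : ℕ)))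

/-- The similarity `ω_{ij}` associated with the rectangle `R_{ij}` of `T`. -/
def omegaMap {m : ℕ} (T : Fin m → Fin m → ℝ) (i j : Fin m) : ℝ × ℝ → ℝ × ℝ :=
  fun p =>
    (colPart T (i : ℕ) + (colPart T ((i : ℕ) + 1) - colPart T (i : ℕ)) * p.1,
     rowPart T (j : ℕ) + (rowPart T ((j : ℕ) + 1) - rowPart T (j : ℕ)) * p.2)

/-- A similarity of the plane with ratio `c ∈ (0,1)` (Euclidean distance). -/
def IsSimilarity2 (c : ℝ) (S : ℝ × ℝ → ℝ × ℝ) : Prop :=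
  0 < c ∧ c < 1 ∧ ∀ x y : ℝ × ℝ,
    Real.sqrt (((S x).1 - (S y).1) ^ 2 + ((S x).2 - (S y).2) ^ 2) =
      c * Real.sqrt ((x.1 - y.1) ^ 2 + (x.2 - y.2) ^ 2)

/-- A self-similar subset of the plane. -/
def IsSelfSimilar2 (E : Set (ℝ × ℝ)) : Prop :=
  ∃ (k : ℕ) (S : Fin (k + 1) → ℝ × ℝ → ℝ × ℝ) (c : Fin (k + 1) → ℝ),
    (∀ j, IsSimilarity2 (c j) (S j)) ∧ E = ⋃ j, S j '' E

end

section Aux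
open Finset in
lemma colPart_zero {m : ℕ} (T : Fin m → Fin m → ℝ) : colPart T 0 = 0 := by
  simp [colPart]

open Finset in
lemma colPart_succ {m : ℕ} (T : Fin m → Fin m → ℝ) (k : Fin m) :
    colPart T ((k:ℕ)+1) = colPart T (k:ℕ) + ∑ j, T k j := by
  unfold colPart
  rw [show (Finset.univ.filter (fun i : Fin m => (i:ℕ) < (k:ℕ)+1))
      = insert k (Finset.univ.filter (fun i : Fin m => (i:ℕ) < (k:ℕ))) from ?_]
  · rw [Finset.sum_insert (by simp)]; ring
  · ext i
    simp [Nat.lt_succ_iff, le_iff_lt_or_eq, Fin.val_eq_val, or_comm]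

open Finset in
lemma colPart_last {m : ℕ} (T : Fin m → Fin m → ℝ) (h1 : ∑ i, ∑ j, T i j = 1) :
    colPart T m = 1 := by
  unfold colPart
  rw [show (Finset.univ.filter (fun i : Fin m => (i:ℕ) < m)) = Finset.univ from ?_]
  · exact h1
  · ext i; simp [i.is_lt]

lemma colPart_mono {m : ℕ} (T : Fin m → Fin m → ℝ) (h2 : ∀ i, 0 < ∑ j, T i j) :
    Monotone (colPart T) := by
  intro k l hkl
  apply Finset.sum_le_sum_of_subset_of_nonneg
  · intro i hi
    simp only [Finset.mem_filter, Finset.mem_univ, true_and] at hi ⊢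
    omega
  · intro i _ _
    exact (h2 i).le

lemma colPart_nonneg {m : ℕ} (T : Fin m → Fin m → ℝ) (h2 : ∀ i, 0 < ∑ j, T i j)
    (k : ℕ) : 0 ≤ colPart T k := by
  simpa [colPart_zero] using colPart_mono T h2 (Nat.zero_le k)

lemma colPart_le_one {m : ℕ} (T : Fin m → Fin m → ℝ) (h1 : ∑ i, ∑ j, T i j = 1)
    (h2 : ∀ i, 0 < ∑ j, T i j) {k : ℕ} (hk : k ≤ m) : colPart T k ≤ 1 := by
  simpa [colPart_last T h1] using colPart_mono T h2 hk

lemma colPart_lt_succ {m : ℕ} (T : Fin m → Fin m → ℝ) (h2 : ∀ i, 0 < ∑ j, T i j)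
    (k : Fin m) : colPart T (k:ℕ) < colPart T ((k:ℕ)+1) := by
  rw [colPart_succ]
  linarith [h2 k]

lemma rowPart_eq_colPart {m : ℕ} (T : Fin m → Fin m → ℝ) (k : ℕ) :
    rowPart T k = colPart (fun i j => T j i) k := rfl

end Aux
section Aux2

lemma colsum_lt_one {m : ℕ} (hm : 2 ≤ m) (T : Fin m → Fin m → ℝ)
    (h1 : ∑ i, ∑ j, T i j = 1) (h2 : ∀ i, 0 < ∑ j, T i j) (i : Fin m) :
    ∑ j, T i j < 1 := by
  have herase : ∑ i', (∑ j, T i' j) = (∑ j, T i j) + ∑ i' ∈ Finset.univ.erase i, ∑ j, T i' j :=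
    (Finset.add_sum_erase _ _ (Finset.mem_univ i)).symm
  have hpos : 0 < ∑ i' ∈ Finset.univ.erase i, ∑ j, T i' j := by
    apply Finset.sum_pos (fun i' _ => h2 i')
    have : 1 ≤ (Finset.univ.erase i).card := by
      rw [Finset.card_erase_of_mem (Finset.mem_univ i)]
      simp only [Finset.card_univ, Fintype.card_fin]
      omega
    exact Finset.card_pos.1 (by omega)
  rw [h1] at herase
  linarith

lemma qvol_scale {m : ℕ} (T : Fin m → Fin m → ℝ) (Q : ℝ → ℝ → ℝ)
    (hfix : IsTTrans T Q Q) (i j : Fin m) {a b c d : ℝ}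
    (ha : a ∈ Set.Icc (colPart T (i:ℕ)) (colPart T ((i:ℕ)+1)))
    (hb : b ∈ Set.Icc (colPart T (i:ℕ)) (colPart T ((i:ℕ)+1)))
    (hc : c ∈ Set.Icc (rowPart T (j:ℕ)) (rowPart T ((j:ℕ)+1)))
    (hd : d ∈ Set.Icc (rowPart T (j:ℕ)) (rowPart T ((j:ℕ)+1))) :
    QVol Q a b c d = T i j *
      QVol Q ((a - colPart T (i:ℕ)) / (colPart T ((i:ℕ)+1) - colPart T (i:ℕ)))
             ((b - colPart T (i:ℕ)) / (colPart T ((i:ℕ)+1) - colPart T (i:ℕ)))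
             ((c - rowPart T (j:ℕ)) / (rowPart T ((j:ℕ)+1) - rowPart T (j:ℕ)))
             ((d - rowPart T (j:ℕ)) / (rowPart T ((j:ℕ)+1) - rowPart T (j:ℕ))) := by
  unfold QVol
  rw [hfix i j b d hb hd, hfix i j b c hb hc, hfix i j a d ha hd, hfix i j a c ha hc]
  ring

lemma qvol_split_u (Q : ℝ → ℝ → ℝ) (a s b c d : ℝ) :
    QVol Q a b c d = QVol Q a s c d + QVol Q s b c d := by
  unfold QVol; ring

lemma qvol_split_v (Q : ℝ → ℝ → ℝ) (a b c s d : ℝ) :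
    QVol Q a b c d = QVol Q a b c s + QVol Q a b s d := by
  unfold QVol; ring

/-- Every closed rectangle within distance `ε` of `x` (inside `[0,1]²`) has zero `Q`-volume. -/
def NullAt (Q : ℝ → ℝ → ℝ) (x : ℝ × ℝ) (ε : ℝ) : Prop :=
  ∀ a b c d : ℝ, a ≤ b → c ≤ d → 0 ≤ a → b ≤ 1 → 0 ≤ c → d ≤ 1 →
    x.1 - ε ≤ a → b ≤ x.1 + ε → x.2 - ε ≤ c → d ≤ x.2 + ε → QVol Q a b c d = 0

lemma notMem_suppQ_of_nullAt (Q : ℝ → ℝ → ℝ) {x : ℝ × ℝ} {ε : ℝ}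
    (hx : x ∈ Set.Icc (0:ℝ) 1 ×ˢ Set.Icc (0:ℝ) 1) (hε : 0 < ε) (h : NullAt Q x ε) :
    x ∉ suppQ Q := by
  intro hmem
  apply hmem.2
  refine ⟨(Set.Ioo (x.1-ε) (x.1+ε) ∩ Set.Icc 0 1) ×ˢ (Set.Ioo (x.2-ε) (x.2+ε) ∩ Set.Icc 0 1),
    ⟨⟨_, _, ⟨Set.ordConnected_Ioo.inter Set.ordConnected_Icc, _, isOpen_Ioo, rfl⟩,
      ⟨Set.ordConnected_Ioo.inter Set.ordConnected_Icc, _, isOpen_Ioo, rfl⟩, rfl⟩, ?_⟩, ?_, ?_⟩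
  · intro a b c d hab hcd hsub
    have h₁ := hsub (Set.mk_mem_prod (Set.left_mem_Icc.2 hab) (Set.left_mem_Icc.2 hcd))
    have h₂ := hsub (Set.mk_mem_prod (Set.right_mem_Icc.2 hab) (Set.right_mem_Icc.2 hcd))
    obtain ⟨⟨⟨ha1, _⟩, ha0, _⟩, ⟨hc1, _⟩, hc0, _⟩ := h₁
    obtain ⟨⟨⟨_, hb1⟩, _, hb0⟩, ⟨_, hd1⟩, _, hd0⟩ := h₂
    exact h a b c d hab hcd ha0 hb0 hc0 hd0 ha1.le hb1.le hc1.le hd1.le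
  · exact ⟨Set.mem_Ioo.2 ⟨by linarith, by linarith⟩, hx.1⟩
  · exact ⟨Set.mem_Ioo.2 ⟨by linarith, by linarith⟩, hx.2⟩

lemma exists_nullAt_of_notMem (Q : ℝ → ℝ → ℝ) {x : ℝ × ℝ}
    (hx : x ∈ Set.Icc (0:ℝ) 1 ×ˢ Set.Icc (0:ℝ) 1) (hn : x ∉ suppQ Q) :
    ∃ ε > 0, NullAt Q x ε := by
  have hx' : x ∈ ⋃₀ {R | OpenQNull Q R} := by
    by_contra h; exact hn ⟨hx, h⟩
  obtain ⟨R, hR, hxR⟩ := hx'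
  obtain ⟨⟨I₁, I₂, ⟨hI₁c, U₁, hU₁, rfl⟩, ⟨hI₂c, U₂, hU₂, rfl⟩, rfl⟩, hnull⟩ := hR
  obtain ⟨ε₁, hε₁, hball₁⟩ := Metric.isOpen_iff.1 hU₁ x.1 hxR.1.1
  obtain ⟨ε₂, hε₂, hball₂⟩ := Metric.isOpen_iff.1 hU₂ x.2 hxR.2.1
  refine ⟨min ε₁ ε₂ / 2, by positivity, ?_⟩
  intro a b c d hab hcd ha0 hb0 hc0 hd0 ha1 hb1 hc1 hd1
  apply hnull a b c d hab hcd
  rintro ⟨u, v⟩ ⟨hu, hv⟩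
  simp only [Set.mem_Icc] at hu hv
  have hmin₁ : min ε₁ ε₂ / 2 < ε₁ := by
    have := min_le_left ε₁ ε₂; linarith [lt_min hε₁ hε₂]
  have hmin₂ : min ε₁ ε₂ / 2 < ε₂ := by
    have := min_le_right ε₁ ε₂; linarith [lt_min hε₁ hε₂]
  refine ⟨⟨hball₁ ?_, le_trans ha0 hu.1, le_trans hu.2 hb0⟩,
          ⟨hball₂ ?_, le_trans hc0 hv.1, le_trans hv.2 hd0⟩⟩
  · rw [Metric.mem_ball, Real.dist_eq, abs_sub_lt_iff]
    constructor <;> linarith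
  · rw [Metric.mem_ball, Real.dist_eq, abs_sub_lt_iff]
    constructor <;> linarith

end Aux2
section Aux3

lemma exists_gap (m : ℕ) (p : ℕ → ℝ) (x : ℝ) :
    ∃ δ > 0, ∀ k ≤ m, p k ≠ x → δ ≤ |p k - x| := by
  have hne : (Finset.range (m+1)).Nonempty := ⟨0, by simp⟩
  refine ⟨(Finset.range (m+1)).inf' hne (fun k => if p k = x then 1 else |p k - x|), ?_, ?_⟩
  · rw [gt_iff_lt, Finset.lt_inf'_iff]
    intro k _
    by_cases h : p k = x
    · simp [h]
    · simp only [if_neg h]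
      exact abs_pos.2 (sub_ne_zero.2 h)
  · intro k hk hne'
    have := Finset.inf'_le (fun k => if p k = x then 1 else |p k - x|)
      (Finset.mem_range.2 (Nat.lt_succ_of_le hk))
    rwa [if_neg hne'] at this

lemma side_cell {m : ℕ} (hm : 1 ≤ m) (p : ℕ → ℝ) (hp0 : p 0 = 0) (hpm : p m = 1)
    (hmono : Monotone p) {x δ : ℝ} (hx0 : 0 ≤ x) (hx1 : x ≤ 1) (hδ : 0 < δ)
    (hgap : ∀ k ≤ m, p k ≠ x → δ ≤ |p k - x|)
    {a b : ℝ} (hab : a ≤ b) (ha0 : 0 ≤ a) (hb1 : b ≤ 1)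
    (hside : (b ≤ x ∧ x - δ ≤ a) ∨ (x ≤ a ∧ b ≤ x + δ)) :
    ∃ i : ℕ, i < m ∧ p i ≤ a ∧ b ≤ p (i+1) ∧ p i ≤ x ∧ x ≤ p (i+1) := by
  rcases hside with ⟨hbx, hxa⟩ | ⟨hxa, hbx⟩
  · by_cases hx : 0 < x
    · set s := (Finset.range m).filter (fun i => p i < x) with hs
      have hne : s.Nonempty := ⟨0, by simp only [hs, Finset.mem_filter, Finset.mem_range]; exact ⟨by omega, by rw [hp0]; exact hx⟩⟩
      set i := s.max' hne with hi
      have his : i ∈ s := s.max'_mem hne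
      have him : i < m := Finset.mem_range.1 (Finset.mem_filter.1 his).1
      have hpix : p i < x := (Finset.mem_filter.1 his).2
      have hxpi1 : x ≤ p (i+1) := by
        by_contra hcon
        push_neg at hcon
        rcases Nat.lt_or_ge (i+1) m with h' | h'
        · have : i + 1 ∈ s := Finset.mem_filter.2 ⟨Finset.mem_range.2 h', hcon⟩
          have := s.le_max' _ this
          omega
        · have : p (i+1) ≥ 1 := hpm ▸ hmono h'
          linarith
      have hgap' : δ ≤ x - p i := by
        have := hgap i (le_of_lt him) (ne_of_lt hpix)
        rwa [abs_of_nonpos (by linarith), neg_sub] at this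
      exact ⟨i, him, by linarith, by linarith, hpix.le, hxpi1⟩
    · have hx' : x = 0 := le_antisymm (not_lt.1 hx) hx0
      subst hx'
      have hab' : a = 0 ∧ b = 0 := ⟨le_antisymm (hab.trans hbx) ha0, le_antisymm hbx (ha0.trans hab)⟩
      refine ⟨0, hm, by rw [hp0, hab'.1], ?_, le_of_eq hp0, ?_⟩
      · rw [hab'.2]; rw [← hp0]; exact hmono (Nat.zero_le 1)
      · rw [← hp0]; exact hmono (Nat.zero_le 1)
  · by_cases hx : x < 1
    · set s := (Finset.range m).filter (fun i => x < p (i+1)) with hs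
      have hne : s.Nonempty := ⟨m-1, by
        simp only [hs, Finset.mem_filter, Finset.mem_range]
        constructor
        · omega
        · rw [(by omega : m - 1 + 1 = m), hpm]; exact hx⟩
      set i := s.min' hne with hi
      have his : i ∈ s := s.min'_mem hne
      have him : i < m := Finset.mem_range.1 (Finset.mem_filter.1 his).1
      have hpix : x < p (i+1) := (Finset.mem_filter.1 his).2
      have hpi : p i ≤ x := by
        rcases Nat.eq_zero_or_pos i with h0 | h0
        · rw [h0, hp0]; exact hx0
        · by_contra hcon
          push_neg at hcon
          have : i - 1 ∈ s := by
            refine Finset.mem_filter.2 ⟨Finset.mem_range.2 (by omega), ?_⟩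
            rwa [(by omega : i - 1 + 1 = i)]
          have := s.min'_le _ this
          omega
      have hgap' : δ ≤ p (i+1) - x := by
        have := hgap (i+1) him (by intro h; linarith [h ▸ hpix])
        rwa [abs_of_nonneg (by linarith)] at this
      exact ⟨i, him, by linarith, by linarith, hpi, hpix.le⟩
    · have hx' : x = 1 := le_antisymm hx1 (not_lt.1 hx)
      subst hx'
      have hab' : a = 1 ∧ b = 1 := ⟨le_antisymm (hab.trans hb1) hxa, le_antisymm hb1 (hxa.trans hab)⟩
      have hsucc : m - 1 + 1 = m := by omega
      refine ⟨m-1, by omega, ?_, ?_, ?_, ?_⟩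
      · rw [hab'.1, ← hpm]; exact hmono (by omega)
      · rw [hab'.2, hsucc, hpm]
      · rw [← hpm]; exact hmono (by omega)
      · rw [hsucc, hpm]

end Aux3
section Aux4

lemma part_facts {m : ℕ} (hm : 2 ≤ m) (T : Fin m → Fin m → ℝ)
    (h1 : ∑ i, ∑ j, T i j = 1) (h2 : ∀ i, 0 < ∑ j, T i j) :
    colPart T 0 = 0 ∧ colPart T m = 1 ∧ Monotone (colPart T) ∧
    (∀ i : Fin m, 0 < colPart T ((i:ℕ)+1) - colPart T (i:ℕ)) ∧
    (∀ i : Fin m, colPart T ((i:ℕ)+1) - colPart T (i:ℕ) < 1) := by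
  refine ⟨colPart_zero T, colPart_last T h1, colPart_mono T h2, ?_, ?_⟩
  · intro i
    have := colPart_lt_succ T h2 i
    linarith
  · intro i
    rw [colPart_succ T i]
    have := colsum_lt_one hm T h1 h2 i
    linarith


lemma aux_div_mono {D a b p : ℝ} (hD : 0 < D) (h : a ≤ b) : (a - p)/D ≤ (b - p)/D := by
  apply div_le_div_of_nonneg_right (by linarith) hD.le

lemma aux_div_lower {D ε δ p xx a : ℝ} (hD : 0 < D) (hδε : δ ≤ ε * D) (h : xx - δ ≤ a) :
    (xx - p) / D - ε ≤ (a - p) / D := by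
  rw [sub_le_iff_le_add, div_add' _ _ _ hD.ne', div_le_div_iff₀ hD hD]
  nlinarith

lemma aux_div_upper {D ε δ p xx b : ℝ} (hD : 0 < D) (hδε : δ ≤ ε * D) (h : b ≤ xx + δ) :
    (b - p) / D ≤ (xx - p) / D + ε := by
  rw [div_add' _ _ _ hD.ne', div_le_div_iff₀ hD hD]
  nlinarith

end Aux4
section Aux5

lemma star {m : ℕ} (hm : 2 ≤ m) (T : Fin m → Fin m → ℝ)
    (h1 : ∑ i, ∑ j, T i j = 1) (h2 : ∀ i, 0 < ∑ j, T i j) (h3 : ∀ j, 0 < ∑ i, T i j)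
    (Q : ℝ → ℝ → ℝ) (hfix : IsTTrans T Q Q)
    {x : ℝ × ℝ} (hx : x ∈ Set.Icc (0:ℝ) 1 ×ˢ Set.Icc (0:ℝ) 1)
    (H : ∀ i j : Fin m,
        colPart T (i:ℕ) ≤ x.1 → x.1 ≤ colPart T ((i:ℕ)+1) →
        rowPart T (j:ℕ) ≤ x.2 → x.2 ≤ rowPart T ((j:ℕ)+1) → T i j ≠ 0 →
        ((x.1 - colPart T (i:ℕ)) / (colPart T ((i:ℕ)+1) - colPart T (i:ℕ)),
         (x.2 - rowPart T (j:ℕ)) / (rowPart T ((j:ℕ)+1) - rowPart T (j:ℕ))) ∉ suppQ Q) :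
    x ∉ suppQ Q := by
  classical
  obtain ⟨hp0, hpm, hpmono, hpstep, _⟩ := part_facts hm T h1 h2
  have h1' : ∑ i, ∑ j, (fun i j => T j i) i j = 1 := by
    rw [Finset.sum_comm]; exact h1
  obtain ⟨hq0, hqm, hqmono, hqstep, _⟩ := part_facts hm (fun i j => T j i) h1' h3
  rw [← rowPart_eq_colPart] at hqm hq0
  have hqmono' : Monotone (rowPart T) := hqmono
  have hqstep' : ∀ j : Fin m, 0 < rowPart T ((j:ℕ)+1) - rowPart T (j:ℕ) := hqstep
  -- the point of the preimage in cell (i,j)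
  set y : Fin m → Fin m → ℝ × ℝ := fun i j =>
    ((x.1 - colPart T (i:ℕ)) / (colPart T ((i:ℕ)+1) - colPart T (i:ℕ)),
     (x.2 - rowPart T (j:ℕ)) / (rowPart T ((j:ℕ)+1) - rowPart T (j:ℕ))) with hy
  -- for each relevant cell, a null radius around the preimage
  have hmain : ∀ ij : Fin m × Fin m, ∃ ε, 0 < ε ∧
      ((colPart T (ij.1:ℕ) ≤ x.1 ∧ x.1 ≤ colPart T ((ij.1:ℕ)+1) ∧
        rowPart T (ij.2:ℕ) ≤ x.2 ∧ x.2 ≤ rowPart T ((ij.2:ℕ)+1) ∧ T ij.1 ij.2 ≠ 0) →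
        NullAt Q (y ij.1 ij.2) ε) := by
    rintro ⟨i, j⟩
    by_cases h : colPart T (i:ℕ) ≤ x.1 ∧ x.1 ≤ colPart T ((i:ℕ)+1) ∧
        rowPart T (j:ℕ) ≤ x.2 ∧ x.2 ≤ rowPart T ((j:ℕ)+1) ∧ T i j ≠ 0
    · obtain ⟨ha, hb, hc, hd, ht⟩ := h
      have hymem : y i j ∈ Set.Icc (0:ℝ) 1 ×ˢ Set.Icc (0:ℝ) 1 := by
        constructor
        · constructor
          · exact div_nonneg (by linarith) (hpstep i).le
          · rw [div_le_one (hpstep i)]; linarith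
        · constructor
          · exact div_nonneg (by linarith) (hqstep' j).le
          · rw [div_le_one (hqstep' j)]; linarith
      obtain ⟨ε, hε, hN⟩ := exists_nullAt_of_notMem Q hymem (H i j ha hb hc hd ht)
      exact ⟨ε, hε, fun _ => hN⟩
    · exact ⟨1, one_pos, fun h' => absurd ⟨h'.1, h'.2.1, h'.2.2.1, h'.2.2.2.1, h'.2.2.2.2⟩ h⟩
  choose εf hεfpos hεfN using hmain
  have hfin : Nonempty (Fin m) := ⟨⟨0, by omega⟩⟩
  have hneF : (Finset.univ : Finset (Fin m)).Nonempty := Finset.univ_nonempty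
  have hneP : (Finset.univ : Finset (Fin m × Fin m)).Nonempty := Finset.univ_nonempty
  obtain ⟨δ₁, hδ₁, hgap₁⟩ := exists_gap m (colPart T) x.1
  obtain ⟨δ₂, hδ₂, hgap₂⟩ := exists_gap m (rowPart T) x.2
  set c₁ := Finset.univ.inf' hneF (fun i : Fin m => colPart T ((i:ℕ)+1) - colPart T (i:ℕ)) with hc₁
  set c₂ := Finset.univ.inf' hneF (fun j : Fin m => rowPart T ((j:ℕ)+1) - rowPart T (j:ℕ)) with hc₂
  have hc₁pos : 0 < c₁ := by
    rw [hc₁, Finset.lt_inf'_iff]; exact fun i _ => hpstep i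
  have hc₂pos : 0 < c₂ := by
    rw [hc₂, Finset.lt_inf'_iff]; exact fun j _ => hqstep' j
  have hc₁le : ∀ i : Fin m, c₁ ≤ colPart T ((i:ℕ)+1) - colPart T (i:ℕ) :=
    fun i => Finset.inf'_le _ (Finset.mem_univ i)
  have hc₂le : ∀ j : Fin m, c₂ ≤ rowPart T ((j:ℕ)+1) - rowPart T (j:ℕ) :=
    fun j => Finset.inf'_le _ (Finset.mem_univ j)
  set εmin := Finset.univ.inf' hneP εf with hεmin
  have hεminpos : 0 < εmin := by
    rw [hεmin, Finset.lt_inf'_iff]; exact fun ij _ => hεfpos ij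
  have hεminle : ∀ ij : Fin m × Fin m, εmin ≤ εf ij :=
    fun ij => Finset.inf'_le _ (Finset.mem_univ ij)
  set δ := min (min δ₁ δ₂) (min c₁ c₂ * εmin) with hδdef
  have hδpos : 0 < δ := by
    apply lt_min (lt_min hδ₁ hδ₂)
    exact mul_pos (lt_min hc₁pos hc₂pos) hεminpos
  -- the key claim: quadrant pieces have zero volume
  have key : ∀ a b e f : ℝ, a ≤ b → e ≤ f → 0 ≤ a → b ≤ 1 → 0 ≤ e → f ≤ 1 →
      x.1 - δ ≤ a → b ≤ x.1 + δ → x.2 - δ ≤ e → f ≤ x.2 + δ →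
      (b ≤ x.1 ∨ x.1 ≤ a) → (f ≤ x.2 ∨ x.2 ≤ e) → QVol Q a b e f = 0 := by
    intro a b e f hab hef ha0 hb1 he0 hf1 hxa hbx hxe hfx hu hv
    have hδgap₁ : ∀ k ≤ m, colPart T k ≠ x.1 → δ ≤ |colPart T k - x.1| :=
      fun k hk hne' => le_trans (le_trans (min_le_left _ _) (min_le_left _ _)) (hgap₁ k hk hne')
    have hδgap₂ : ∀ k ≤ m, rowPart T k ≠ x.2 → δ ≤ |rowPart T k - x.2| :=
      fun k hk hne' => le_trans (le_trans (min_le_left _ _) (min_le_right _ _)) (hgap₂ k hk hne')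
    obtain ⟨i', him, hpa, hpb, hpx1, hpx2⟩ :=
      side_cell (by omega) (colPart T) hp0 hpm hpmono hx.1.1 hx.1.2 hδpos hδgap₁ hab ha0 hb1
        (by rcases hu with h | h
            · exact Or.inl ⟨h, hxa⟩
            · exact Or.inr ⟨h, hbx⟩)
    obtain ⟨j', hjm, hqe, hqf, hqx1, hqx2⟩ :=
      side_cell (by omega) (rowPart T) hq0 hqm hqmono' hx.2.1 hx.2.2 hδpos hδgap₂ hef he0 hf1
        (by rcases hv with h | h
            · exact Or.inl ⟨h, hxe⟩
            · exact Or.inr ⟨h, hfx⟩)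
    set iF : Fin m := ⟨i', him⟩ with hiF
    set jF : Fin m := ⟨j', hjm⟩ with hjF
    have hiv : (iF:ℕ) = i' := rfl
    have hjv : (jF:ℕ) = j' := rfl
    rw [← hiv] at hpa hpb hpx1 hpx2
    rw [← hjv] at hqe hqf hqx1 hqx2
    have hDi : 0 < colPart T ((iF:ℕ)+1) - colPart T (iF:ℕ) := hpstep iF
    have hDj : 0 < rowPart T ((jF:ℕ)+1) - rowPart T (jF:ℕ) := hqstep' jF
    have hmema : a ∈ Set.Icc (colPart T (iF:ℕ)) (colPart T ((iF:ℕ)+1)) := ⟨hpa, le_trans hab hpb⟩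
    have hmemb : b ∈ Set.Icc (colPart T (iF:ℕ)) (colPart T ((iF:ℕ)+1)) := ⟨le_trans hpa hab, hpb⟩
    have hmeme : e ∈ Set.Icc (rowPart T (jF:ℕ)) (rowPart T ((jF:ℕ)+1)) := ⟨hqe, le_trans hef hqf⟩
    have hmemf : f ∈ Set.Icc (rowPart T (jF:ℕ)) (rowPart T ((jF:ℕ)+1)) := ⟨le_trans hqe hef, hqf⟩
    rw [qvol_scale T Q hfix iF jF hmema hmemb hmeme hmemf]
    by_cases ht : T iF jF = 0
    · rw [ht, zero_mul]
    · have hN := hεfN (iF, jF) ⟨hpx1, hpx2, hqx1, hqx2, ht⟩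
      have hδc₁ : δ ≤ εf (iF, jF) * (colPart T ((iF:ℕ)+1) - colPart T (iF:ℕ)) := by
        calc δ ≤ min c₁ c₂ * εmin := min_le_right _ _
        _ ≤ (colPart T ((iF:ℕ)+1) - colPart T (iF:ℕ)) * εf (iF, jF) := by
            apply mul_le_mul (le_trans (min_le_left _ _) (hc₁le iF)) (hεminle _)
              hεminpos.le hDi.le
        _ = εf (iF, jF) * (colPart T ((iF:ℕ)+1) - colPart T (iF:ℕ)) := mul_comm _ _
      have hδc₂ : δ ≤ εf (iF, jF) * (rowPart T ((jF:ℕ)+1) - rowPart T (jF:ℕ)) := by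
        calc δ ≤ min c₁ c₂ * εmin := min_le_right _ _
        _ ≤ (rowPart T ((jF:ℕ)+1) - rowPart T (jF:ℕ)) * εf (iF, jF) := by
            apply mul_le_mul (le_trans (min_le_right _ _) (hc₂le jF)) (hεminle _)
              hεminpos.le hDj.le
        _ = εf (iF, jF) * (rowPart T ((jF:ℕ)+1) - rowPart T (jF:ℕ)) := mul_comm _ _
      have hy1 : (y iF jF).1 = (x.1 - colPart T (iF:ℕ)) / (colPart T ((iF:ℕ)+1) - colPart T (iF:ℕ)) := rfl
      have hy2 : (y iF jF).2 = (x.2 - rowPart T (jF:ℕ)) / (rowPart T ((jF:ℕ)+1) - rowPart T (jF:ℕ)) := rfl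
      have hz : QVol Q
          ((a - colPart T (iF:ℕ)) / (colPart T ((iF:ℕ)+1) - colPart T (iF:ℕ)))
          ((b - colPart T (iF:ℕ)) / (colPart T ((iF:ℕ)+1) - colPart T (iF:ℕ)))
          ((e - rowPart T (jF:ℕ)) / (rowPart T ((jF:ℕ)+1) - rowPart T (jF:ℕ)))
          ((f - rowPart T (jF:ℕ)) / (rowPart T ((jF:ℕ)+1) - rowPart T (jF:ℕ))) = 0 := by
        apply hN
        · exact aux_div_mono hDi hab
        · exact aux_div_mono hDj hef
        · exact div_nonneg (by linarith) hDi.le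
        · rw [div_le_one hDi]; linarith
        · exact div_nonneg (by linarith) hDj.le
        · rw [div_le_one hDj]; linarith
        · rw [hy1]; exact aux_div_lower hDi hδc₁ hxa
        · rw [hy1]; exact aux_div_upper hDi hδc₁ hbx
        · rw [hy2]; exact aux_div_lower hDj hδc₂ hxe
        · rw [hy2]; exact aux_div_upper hDj hδc₂ hfx
      rw [hz, mul_zero]
  -- now prove NullAt and conclude
  apply notMem_suppQ_of_nullAt Q hx hδpos
  intro a b e f hab hef ha0 hb1 he0 hf1 hxa hbx hxe hfx
  set s₁ := max a (min b x.1) with hs₁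
  set s₂ := max e (min f x.2) with hs₂
  have has₁ : a ≤ s₁ := le_max_left _ _
  have hs₁b : s₁ ≤ b := max_le hab (min_le_left _ _)
  have hes₂ : e ≤ s₂ := le_max_left _ _
  have hs₂f : s₂ ≤ f := max_le hef (min_le_left _ _)
  have hq₁ : s₁ ≤ x.1 ∨ x.1 ≤ a := by
    rcases le_total a x.1 with h | h
    · exact Or.inl (max_le h (min_le_right _ _))
    · exact Or.inr h
  have hq₂ : x.1 ≤ s₁ ∨ b ≤ x.1 := by
    rcases le_total x.1 b with h | h
    · exact Or.inl (le_trans (le_min h le_rfl) (le_max_right _ _))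
    · exact Or.inr h
  have hq₃ : s₂ ≤ x.2 ∨ x.2 ≤ e := by
    rcases le_total e x.2 with h | h
    · exact Or.inl (max_le h (min_le_right _ _))
    · exact Or.inr h
  have hq₄ : x.2 ≤ s₂ ∨ f ≤ x.2 := by
    rcases le_total x.2 f with h | h
    · exact Or.inl (le_trans (le_min h le_rfl) (le_max_right _ _))
    · exact Or.inr h
  rw [qvol_split_u Q a s₁ b e f, qvol_split_v Q a s₁ e s₂ f, qvol_split_v Q s₁ b e s₂ f]
  have z₁ : QVol Q a s₁ e s₂ = 0 := by
    apply key a s₁ e s₂ has₁ hes₂ ha0 (le_trans hs₁b hb1) he0 (le_trans hs₂f hf1)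
      hxa (le_trans hs₁b hbx) hxe (le_trans hs₂f hfx) ?_ ?_
    · rcases hq₁ with h | h
      · exact Or.inl h
      · exact Or.inr h
    · rcases hq₃ with h | h
      · exact Or.inl h
      · exact Or.inr h
  have z₂ : QVol Q a s₁ s₂ f = 0 := by
    apply key a s₁ s₂ f has₁ hs₂f ha0 (le_trans hs₁b hb1) (le_trans he0 hes₂) hf1
      hxa (le_trans hs₁b hbx) (le_trans hxe hes₂) hfx ?_ ?_
    · rcases hq₁ with h | h
      · exact Or.inl h
      · exact Or.inr h
    · rcases hq₄ with h | h
      · exact Or.inr h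
      · exact Or.inl h
  have z₃ : QVol Q s₁ b e s₂ = 0 := by
    apply key s₁ b e s₂ hs₁b hes₂ (le_trans ha0 has₁) hb1 he0 (le_trans hs₂f hf1)
      (le_trans hxa has₁) hbx hxe (le_trans hs₂f hfx) ?_ ?_
    · rcases hq₂ with h | h
      · exact Or.inr h
      · exact Or.inl h
    · rcases hq₃ with h | h
      · exact Or.inl h
      · exact Or.inr h
  have z₄ : QVol Q s₁ b s₂ f = 0 := by
    apply key s₁ b s₂ f hs₁b hs₂f (le_trans ha0 has₁) hb1 (le_trans he0 hes₂) hf1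
      (le_trans hxa has₁) hbx (le_trans hxe hes₂) hfx ?_ ?_
    · rcases hq₂ with h | h
      · exact Or.inr h
      · exact Or.inl h
    · rcases hq₄ with h | h
      · exact Or.inr h
      · exact Or.inl h
  rw [z₁, z₂, z₃, z₄]
  ring

end Aux5
section Aux6

lemma aux_fwd_lower {D ε w a p1 : ℝ} (hD : 0 < D) (hD1 : D ≤ 1) (hε : 0 ≤ ε) (h : w - ε ≤ a) :
    (p1 + D * w) - ε ≤ p1 + D * a := by nlinarith

lemma aux_fwd_upper {D ε w b p1 : ℝ} (hD : 0 < D) (hD1 : D ≤ 1) (hε : 0 ≤ ε) (h : b ≤ w + ε) :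
    p1 + D * b ≤ (p1 + D * w) + ε := by nlinarith

lemma aux_fwd_le {D a b p1 : ℝ} (hD : 0 ≤ D) (h : a ≤ b) : p1 + D * a ≤ p1 + D * b := by
  nlinarith

lemma aux_fwd_nonneg {D a p1 : ℝ} (h0 : 0 ≤ p1) (hD : 0 ≤ D) (ha : 0 ≤ a) : 0 ≤ p1 + D * a := by
  nlinarith

lemma aux_fwd_le_one {p1 p2 b : ℝ} (h2 : p2 ≤ 1) (hb : b ≤ 1) (hD : 0 ≤ p2 - p1) :
    p1 + (p2 - p1) * b ≤ 1 := by nlinarith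

lemma qvol_scale_fwd {m : ℕ} (hm : 2 ≤ m) (T : Fin m → Fin m → ℝ)
    (h1 : ∑ i, ∑ j, T i j = 1) (h2 : ∀ i, 0 < ∑ j, T i j) (h3 : ∀ j, 0 < ∑ i, T i j)
    (Q : ℝ → ℝ → ℝ) (hfix : IsTTrans T Q Q) (i j : Fin m) {a b c d : ℝ}
    (ha : a ∈ Set.Icc (0:ℝ) 1) (hb : b ∈ Set.Icc (0:ℝ) 1)
    (hc : c ∈ Set.Icc (0:ℝ) 1) (hd : d ∈ Set.Icc (0:ℝ) 1) :
    QVol Q (colPart T (i:ℕ) + (colPart T ((i:ℕ)+1) - colPart T (i:ℕ)) * a)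
           (colPart T (i:ℕ) + (colPart T ((i:ℕ)+1) - colPart T (i:ℕ)) * b)
           (rowPart T (j:ℕ) + (rowPart T ((j:ℕ)+1) - rowPart T (j:ℕ)) * c)
           (rowPart T (j:ℕ) + (rowPart T ((j:ℕ)+1) - rowPart T (j:ℕ)) * d)
    = T i j * QVol Q a b c d := by
  obtain ⟨_, _, _, hpstep, _⟩ := part_facts hm T h1 h2
  have h1' : ∑ i, ∑ j, (fun i j => T j i) i j = 1 := by
    rw [Finset.sum_comm]; exact h1
  obtain ⟨_, _, _, hqstep, _⟩ := part_facts hm (fun i j => T j i) h1' h3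
  have hqstep' : ∀ j : Fin m, 0 < rowPart T ((j:ℕ)+1) - rowPart T (j:ℕ) := hqstep
  have hDi := hpstep i
  have hDj := hqstep' j
  have hmem : ∀ t : ℝ, t ∈ Set.Icc (0:ℝ) 1 →
      colPart T (i:ℕ) + (colPart T ((i:ℕ)+1) - colPart T (i:ℕ)) * t ∈
        Set.Icc (colPart T (i:ℕ)) (colPart T ((i:ℕ)+1)) := by
    intro t ⟨ht0, ht1⟩
    constructor <;> nlinarith
  have hmem' : ∀ t : ℝ, t ∈ Set.Icc (0:ℝ) 1 →
      rowPart T (j:ℕ) + (rowPart T ((j:ℕ)+1) - rowPart T (j:ℕ)) * t ∈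
        Set.Icc (rowPart T (j:ℕ)) (rowPart T ((j:ℕ)+1)) := by
    intro t ⟨ht0, ht1⟩
    constructor <;> nlinarith
  rw [qvol_scale T Q hfix i j (hmem a ha) (hmem b hb) (hmem' c hc) (hmem' d hd)]
  have e : ∀ t : ℝ, (colPart T (i:ℕ) + (colPart T ((i:ℕ)+1) - colPart T (i:ℕ)) * t
      - colPart T (i:ℕ)) / (colPart T ((i:ℕ)+1) - colPart T (i:ℕ)) = t := by
    intro t; field_simp; ring
  have e' : ∀ t : ℝ, (rowPart T (j:ℕ) + (rowPart T ((j:ℕ)+1) - rowPart T (j:ℕ)) * t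
      - rowPart T (j:ℕ)) / (rowPart T ((j:ℕ)+1) - rowPart T (j:ℕ)) = t := by
    intro t; field_simp; ring
  rw [e a, e b, e' c, e' d]

/-- (B): each `ω_{ij}` with `t_{ij} ≠ 0` maps the support into the support. -/
lemma image_supp_subset {m : ℕ} (hm : 2 ≤ m) (T : Fin m → Fin m → ℝ)
    (h1 : ∑ i, ∑ j, T i j = 1) (h2 : ∀ i, 0 < ∑ j, T i j) (h3 : ∀ j, 0 < ∑ i, T i j)
    (Q : ℝ → ℝ → ℝ) (hfix : IsTTrans T Q Q) (i j : Fin m) (ht : T i j ≠ 0) :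
    omegaMap T i j '' suppQ Q ⊆ suppQ Q := by
  obtain ⟨hp0, hpm, hpmono, hpstep, hplt⟩ := part_facts hm T h1 h2
  have h1' : ∑ i, ∑ j, (fun i j => T j i) i j = 1 := by
    rw [Finset.sum_comm]; exact h1
  obtain ⟨hq0, hqm, hqmono, hqstep, hqlt⟩ := part_facts hm (fun i j => T j i) h1' h3
  rw [← rowPart_eq_colPart] at hq0 hqm
  have hqmono' : Monotone (rowPart T) := hqmono
  have hqstep' : ∀ j : Fin m, 0 < rowPart T ((j:ℕ)+1) - rowPart T (j:ℕ) := hqstep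
  have hqlt' : ∀ j : Fin m, rowPart T ((j:ℕ)+1) - rowPart T (j:ℕ) < 1 := hqlt
  rintro z ⟨w, hw, rfl⟩
  have hwsq : w ∈ Set.Icc (0:ℝ) 1 ×ˢ Set.Icc (0:ℝ) 1 := hw.1
  have hDi := hpstep i
  have hDj := hqstep' j
  have hp0' : 0 ≤ colPart T (i:ℕ) := colPart_nonneg T h2 _
  have hp1' : colPart T ((i:ℕ)+1) ≤ 1 := colPart_le_one T h1 h2 (by omega)
  have hq0' : 0 ≤ rowPart T (j:ℕ) := by
    rw [← hq0]; exact hqmono' (Nat.zero_le _)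
  have hq1' : rowPart T ((j:ℕ)+1) ≤ 1 := by
    rw [← hqm]; exact hqmono' (by omega)
  have hxsq : omegaMap T i j w ∈ Set.Icc (0:ℝ) 1 ×ˢ Set.Icc (0:ℝ) 1 := by
    obtain ⟨⟨hw10, hw11⟩, ⟨hw20, hw21⟩⟩ := hwsq
    refine ⟨⟨?_, ?_⟩, ⟨?_, ?_⟩⟩ <;> simp only [omegaMap] <;> nlinarith
  by_contra hx
  obtain ⟨ε, hε, hN⟩ := exists_nullAt_of_notMem Q hxsq hx
  refine absurd hw (notMem_suppQ_of_nullAt Q hwsq hε ?_)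
  intro a b c d hab hcd ha0 hb1 hc0 hd1 hxa hbx hxc hdx
  have hz := qvol_scale_fwd hm T h1 h2 h3 Q hfix i j
    (⟨ha0, hb1.trans' hab⟩ : a ∈ Set.Icc (0:ℝ) 1) ⟨ha0.trans hab, hb1⟩
    (⟨hc0, hd1.trans' hcd⟩ : c ∈ Set.Icc (0:ℝ) 1) ⟨hc0.trans hcd, hd1⟩
  have h0 : QVol Q (colPart T (i:ℕ) + (colPart T ((i:ℕ)+1) - colPart T (i:ℕ)) * a)
      (colPart T (i:ℕ) + (colPart T ((i:ℕ)+1) - colPart T (i:ℕ)) * b)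
      (rowPart T (j:ℕ) + (rowPart T ((j:ℕ)+1) - rowPart T (j:ℕ)) * c)
      (rowPart T (j:ℕ) + (rowPart T ((j:ℕ)+1) - rowPart T (j:ℕ)) * d) = 0 := by
    apply hN
    · exact aux_fwd_le hDi.le hab
    · exact aux_fwd_le hDj.le hcd
    · exact aux_fwd_nonneg hp0' hDi.le ha0
    · exact aux_fwd_le_one hp1' hb1 hDi.le
    · exact aux_fwd_nonneg hq0' hDj.le hc0
    · exact aux_fwd_le_one hq1' hd1 hDj.le
    · exact aux_fwd_lower hDi (by linarith [hplt i]) hε.le hxa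
    · exact aux_fwd_upper hDi (by linarith [hplt i]) hε.le hbx
    · exact aux_fwd_lower hDj (by linarith [hqlt' j]) hε.le hxc
    · exact aux_fwd_upper hDj (by linarith [hqlt' j]) hε.le hdx
  rw [h0] at hz
  exact (mul_eq_zero.1 hz.symm).resolve_left ht

/-- (A): the support is covered by the images of the support. -/
lemma supp_subset_union {m : ℕ} (hm : 2 ≤ m) (T : Fin m → Fin m → ℝ)
    (h1 : ∑ i, ∑ j, T i j = 1) (h2 : ∀ i, 0 < ∑ j, T i j) (h3 : ∀ j, 0 < ∑ i, T i j)
    (Q : ℝ → ℝ → ℝ) (hfix : IsTTrans T Q Q) :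
    suppQ Q ⊆ ⋃ i, ⋃ j, ⋃ (_ : T i j ≠ 0), omegaMap T i j '' suppQ Q := by
  intro x hx
  have hxsq : x ∈ Set.Icc (0:ℝ) 1 ×ˢ Set.Icc (0:ℝ) 1 := hx.1
  by_contra hcon
  have H : ∀ i j : Fin m,
      colPart T (i:ℕ) ≤ x.1 → x.1 ≤ colPart T ((i:ℕ)+1) →
      rowPart T (j:ℕ) ≤ x.2 → x.2 ≤ rowPart T ((j:ℕ)+1) → T i j ≠ 0 →
      ((x.1 - colPart T (i:ℕ)) / (colPart T ((i:ℕ)+1) - colPart T (i:ℕ)),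
       (x.2 - rowPart T (j:ℕ)) / (rowPart T ((j:ℕ)+1) - rowPart T (j:ℕ))) ∉ suppQ Q := by
    intro i j ha hb hc hd ht hy
    apply hcon
    refine Set.mem_iUnion.2 ⟨i, Set.mem_iUnion.2 ⟨j, Set.mem_iUnion.2 ⟨ht, ?_⟩⟩⟩
    refine ⟨_, hy, ?_⟩
    obtain ⟨hp0, hpm, hpmono, hpstep, _⟩ := part_facts hm T h1 h2
    have h1' : ∑ i, ∑ j, (fun i j => T j i) i j = 1 := by
      rw [Finset.sum_comm]; exact h1
    obtain ⟨_, _, _, hqstep, _⟩ := part_facts hm (fun i j => T j i) h1' h3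
    have hqstep' : ∀ j : Fin m, 0 < rowPart T ((j:ℕ)+1) - rowPart T (j:ℕ) := hqstep
    have hDi := (hpstep i).ne'
    have hDj := (hqstep' j).ne'
    simp only [omegaMap]
    have e1 : colPart T (i:ℕ) + (colPart T ((i:ℕ)+1) - colPart T (i:ℕ)) *
        ((x.1 - colPart T (i:ℕ)) / (colPart T ((i:ℕ)+1) - colPart T (i:ℕ))) = x.1 := by
      field_simp
      ring
    have e2 : rowPart T (j:ℕ) + (rowPart T ((j:ℕ)+1) - rowPart T (j:ℕ)) *
        ((x.2 - rowPart T (j:ℕ)) / (rowPart T ((j:ℕ)+1) - rowPart T (j:ℕ))) = x.2 := by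
      field_simp
      ring
    rw [e1, e2]
  exact absurd hx (star hm T h1 h2 h3 Q hfix hxsq H)

end Aux6
section Aux7

lemma omegaMap_mem_sq {m : ℕ} (hm : 2 ≤ m) (T : Fin m → Fin m → ℝ)
    (h1 : ∑ i, ∑ j, T i j = 1) (h2 : ∀ i, 0 < ∑ j, T i j) (h3 : ∀ j, 0 < ∑ i, T i j)
    (i j : Fin m) {w : ℝ × ℝ} (hw : w ∈ Set.Icc (0:ℝ) 1 ×ˢ Set.Icc (0:ℝ) 1) :
    omegaMap T i j w ∈ Set.Icc (0:ℝ) 1 ×ˢ Set.Icc (0:ℝ) 1 := by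
  obtain ⟨_, _, hpmono, hpstep, _⟩ := part_facts hm T h1 h2
  have h1' : ∑ i, ∑ j, (fun i j => T j i) i j = 1 := by
    rw [Finset.sum_comm]; exact h1
  obtain ⟨hq0, hqm, hqmono, hqstep, _⟩ := part_facts hm (fun i j => T j i) h1' h3
  rw [← rowPart_eq_colPart] at hq0 hqm
  have hqmono' : Monotone (rowPart T) := hqmono
  have hqstep' : ∀ j : Fin m, 0 < rowPart T ((j:ℕ)+1) - rowPart T (j:ℕ) := hqstep
  have hp0' : 0 ≤ colPart T (i:ℕ) := colPart_nonneg T h2 _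
  have hp1' : colPart T ((i:ℕ)+1) ≤ 1 := colPart_le_one T h1 h2 (by omega)
  have hq0' : 0 ≤ rowPart T (j:ℕ) := by rw [← hq0]; exact hqmono' (Nat.zero_le _)
  have hq1' : rowPart T ((j:ℕ)+1) ≤ 1 := by rw [← hqm]; exact hqmono' (by omega)
  obtain ⟨⟨hw10, hw11⟩, ⟨hw20, hw21⟩⟩ := hw
  have hDi := hpstep i
  have hDj := hqstep' j
  exact ⟨⟨aux_fwd_nonneg hp0' hDi.le hw10, aux_fwd_le_one hp1' hw11 hDi.le⟩,
         ⟨aux_fwd_nonneg hq0' hDj.le hw20, aux_fwd_le_one hq1' hw21 hDj.le⟩⟩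

lemma shrink_lemma {m : ℕ} (hm : 2 ≤ m) (T : Fin m → Fin m → ℝ)
    (h1 : ∑ i, ∑ j, T i j = 1) (h2 : ∀ i, 0 < ∑ j, T i j) (h3 : ∀ j, 0 < ∑ i, T i j)
    (Q : ℝ → ℝ → ℝ) (hQ : IsQuasiCopula Q) (hfix : IsTTrans T Q Q) :
    ∃ θ : ℝ, 0 ≤ θ ∧ θ < 1 ∧ ∀ k : ℕ, ∀ x : ℝ × ℝ,
      x ∈ (fun A : Set (ℝ × ℝ) => ⋃ i, ⋃ j, ⋃ (_ : T i j ≠ 0), omegaMap T i j '' A)^[k]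
        (Set.Icc (0:ℝ) 1 ×ˢ Set.Icc (0:ℝ) 1) →
      ∃ a b c d : ℝ, 0 ≤ a ∧ a ≤ x.1 ∧ x.1 ≤ b ∧ b ≤ 1 ∧ b - a ≤ θ^k ∧
        0 ≤ c ∧ c ≤ x.2 ∧ x.2 ≤ d ∧ d ≤ 1 ∧ d - c ≤ θ^k ∧ QVol Q a b c d ≠ 0 := by
  obtain ⟨hp0, hpm, hpmono, hpstep, hplt⟩ := part_facts hm T h1 h2
  have h1' : ∑ i, ∑ j, (fun i j => T j i) i j = 1 := by
    rw [Finset.sum_comm]; exact h1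
  obtain ⟨hq0, hqm, hqmono, hqstep, hqlt⟩ := part_facts hm (fun i j => T j i) h1' h3
  have hqstep' : ∀ j : Fin m, 0 < rowPart T ((j:ℕ)+1) - rowPart T (j:ℕ) := hqstep
  have hqlt' : ∀ j : Fin m, rowPart T ((j:ℕ)+1) - rowPart T (j:ℕ) < 1 := hqlt
  have hfin : Nonempty (Fin m) := ⟨⟨0, by omega⟩⟩
  have hneF : (Finset.univ : Finset (Fin m)).Nonempty := Finset.univ_nonempty
  set θ := Finset.univ.sup' hneF (fun i : Fin m =>
    max (colPart T ((i:ℕ)+1) - colPart T (i:ℕ)) (rowPart T ((i:ℕ)+1) - rowPart T (i:ℕ))) with hθ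
  have hθlt : θ < 1 := by
    rw [hθ, Finset.sup'_lt_iff]
    exact fun i _ => max_lt (hplt i) (hqlt' i)
  have hθcol : ∀ i : Fin m, colPart T ((i:ℕ)+1) - colPart T (i:ℕ) ≤ θ :=
    fun i => le_trans (le_max_left _ _) (Finset.le_sup' (fun i : Fin m =>
      max (colPart T ((i:ℕ)+1) - colPart T (i:ℕ)) (rowPart T ((i:ℕ)+1) - rowPart T (i:ℕ)))
      (Finset.mem_univ i))
  have hθrow : ∀ j : Fin m, rowPart T ((j:ℕ)+1) - rowPart T (j:ℕ) ≤ θ :=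
    fun j => le_trans (le_max_right _ _) (Finset.le_sup' (fun i : Fin m =>
      max (colPart T ((i:ℕ)+1) - colPart T (i:ℕ)) (rowPart T ((i:ℕ)+1) - rowPart T (i:ℕ)))
      (Finset.mem_univ j))
  have hθ0 : 0 ≤ θ := le_trans (hpstep ⟨0, by omega⟩).le (hθcol ⟨0, by omega⟩)
  refine ⟨θ, hθ0, hθlt, ?_⟩
  intro k
  induction k with
  | zero =>
    intro x hx
    obtain ⟨h10, h01, h11, _⟩ := hQ.2.1 1 ⟨zero_le_one, le_rfl⟩
    obtain ⟨h00, _, _, _⟩ := hQ.2.1 0 ⟨le_rfl, zero_le_one⟩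
    refine ⟨0, 1, 0, 1, le_rfl, hx.1.1, hx.1.2, le_rfl, by norm_num,
            le_rfl, hx.2.1, hx.2.2, le_rfl, by norm_num, ?_⟩
    unfold QVol
    rw [h10, h01, h11, h00]
    norm_num
  | succ k ih =>
    intro x hx
    rw [Function.iterate_succ_apply'] at hx
    simp only [Set.mem_iUnion] at hx
    obtain ⟨i, j, ht, w, hw, rfl⟩ := hx
    obtain ⟨a, b, c, d, ha0, haw, hwb, hb1, hba, hc0, hcw, hwd, hd1, hdc, hvol⟩ := ih w hw
    have hDi := hpstep i
    have hDj := hqstep' j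
    have hp0' : 0 ≤ colPart T (i:ℕ) := colPart_nonneg T h2 _
    have hp1' : colPart T ((i:ℕ)+1) ≤ 1 := colPart_le_one T h1 h2 (by omega)
    have hq0' : 0 ≤ rowPart T (j:ℕ) := by
      rw [rowPart_eq_colPart]; exact colPart_nonneg _ h3 _
    have hq1' : rowPart T ((j:ℕ)+1) ≤ 1 := by
      rw [rowPart_eq_colPart]; exact colPart_le_one _ h1' h3 (by omega)
    refine ⟨colPart T (i:ℕ) + (colPart T ((i:ℕ)+1) - colPart T (i:ℕ)) * a,
            colPart T (i:ℕ) + (colPart T ((i:ℕ)+1) - colPart T (i:ℕ)) * b,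
            rowPart T (j:ℕ) + (rowPart T ((j:ℕ)+1) - rowPart T (j:ℕ)) * c,
            rowPart T (j:ℕ) + (rowPart T ((j:ℕ)+1) - rowPart T (j:ℕ)) * d,
            aux_fwd_nonneg hp0' hDi.le ha0, aux_fwd_le hDi.le haw,
            aux_fwd_le hDi.le hwb, aux_fwd_le_one hp1' hb1 hDi.le, ?_,
            aux_fwd_nonneg hq0' hDj.le hc0, aux_fwd_le hDj.le hcw,
            aux_fwd_le hDj.le hwd, aux_fwd_le_one hq1' hd1 hDj.le, ?_, ?_⟩
    · calc colPart T (i:ℕ) + (colPart T ((i:ℕ)+1) - colPart T (i:ℕ)) * b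
          - (colPart T (i:ℕ) + (colPart T ((i:ℕ)+1) - colPart T (i:ℕ)) * a)
          = (colPart T ((i:ℕ)+1) - colPart T (i:ℕ)) * (b - a) := by ring
      _ ≤ θ * θ^k := mul_le_mul (hθcol i) hba (by linarith) hθ0
      _ = θ^(k+1) := by rw [pow_succ]; ring
    · calc rowPart T (j:ℕ) + (rowPart T ((j:ℕ)+1) - rowPart T (j:ℕ)) * d
          - (rowPart T (j:ℕ) + (rowPart T ((j:ℕ)+1) - rowPart T (j:ℕ)) * c)
          = (rowPart T ((j:ℕ)+1) - rowPart T (j:ℕ)) * (d - c) := by ring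
      _ ≤ θ * θ^k := mul_le_mul (hθrow j) hdc (by linarith) hθ0
      _ = θ^(k+1) := by rw [pow_succ]; ring
    · rw [qvol_scale_fwd hm T h1 h2 h3 Q hfix i j ⟨ha0, by linarith⟩ ⟨by linarith, hb1⟩
          ⟨hc0, by linarith⟩ ⟨by linarith, hd1⟩]
      exact mul_ne_zero ht hvol

end Aux7

/-- For a proper quasi-transformation matrix `T` of order `m ≥ 2` and the
quasi-copula `Q_T` with `T(Q_T) = Q_T`, the support of `Q_T` is the (nonempty compact)
invariant set of the IFS `{[0,1]²; (ω_{ij})_{t_{ij} ≠ 0}}`. -/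
theorem support_of_qtFixedPoint_is_invariant_set
    {m : ℕ} (hm : 2 ≤ m) (T : Fin m → Fin m → ℝ) (hT : IsQTMatrix T)
    (hproper : ∃ i j, T i j < 0)
    (Q : ℝ → ℝ → ℝ) (hQ : IsQuasiCopula Q) (hfix : IsTTrans T Q Q) :
    (suppQ Q).Nonempty ∧ IsCompact (suppQ Q) ∧
    (suppQ Q = ⋃ i, ⋃ j, ⋃ (_ : T i j ≠ 0), omegaMap T i j '' suppQ Q) ∧
    (suppQ Q = ⋂ k : ℕ,
      (fun A : Set (ℝ × ℝ) => ⋃ i, ⋃ j, ⋃ (_ : T i j ≠ 0), omegaMap T i j '' A)^[k]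
        (Icc (0:ℝ) 1 ×ˢ Icc (0:ℝ) 1)) := by
  obtain ⟨h1, h2, h3, -⟩ := hT
  set sq : Set (ℝ × ℝ) := Set.Icc (0:ℝ) 1 ×ˢ Set.Icc (0:ℝ) 1 with hsq
  set W : Set (ℝ × ℝ) → Set (ℝ × ℝ) :=
    fun A => ⋃ i, ⋃ j, ⋃ (_ : T i j ≠ 0), omegaMap T i j '' A with hW
  have hWmono : ∀ A B : Set (ℝ × ℝ), A ⊆ B → W A ⊆ W B := by
    intro A B h
    exact Set.iUnion_mono fun i => Set.iUnion_mono fun j =>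
      Set.iUnion_mono fun ht => Set.image_mono h
  have hWsq : W sq ⊆ sq := by
    intro z hz
    simp only [hW, Set.mem_iUnion] at hz
    obtain ⟨i, j, ht, w, hw, rfl⟩ := hz
    exact omegaMap_mem_sq hm T h1 h2 h3 i j hw
  have hitermono : ∀ k : ℕ, ∀ A B : Set (ℝ × ℝ), A ⊆ B → W^[k] A ⊆ W^[k] B := by
    intro k
    induction k with
    | zero => simpa using fun A B h => h
    | succ k ih =>
      intro A B h
      rw [Function.iterate_succ_apply, Function.iterate_succ_apply]
      exact ih _ _ (hWmono _ _ h)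
  have hanti : ∀ k : ℕ, W^[k+1] sq ⊆ W^[k] sq := by
    intro k
    rw [Function.iterate_succ_apply]
    exact hitermono k _ _ hWsq
  have hWcompact : ∀ k : ℕ, IsCompact (W^[k] sq) := by
    intro k
    induction k with
    | zero => simpa [hsq] using isCompact_Icc.prod isCompact_Icc
    | succ k ih =>
      rw [Function.iterate_succ_apply']
      apply isCompact_iUnion; intro i
      apply isCompact_iUnion; intro j
      apply isCompact_iUnion; intro ht
      exact ih.image (by unfold omegaMap; fun_prop)
  have hex : ∃ i j : Fin m, T i j ≠ 0 := by
    by_contra h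
    push_neg at h
    simp only [h, Finset.sum_const_zero] at h1
    norm_num at h1
  obtain ⟨i₀, j₀, ht₀⟩ := hex
  have hWne : ∀ k : ℕ, (W^[k] sq).Nonempty := by
    intro k
    induction k with
    | zero => exact ⟨(0, 0), ⟨⟨le_rfl, zero_le_one⟩, ⟨le_rfl, zero_le_one⟩⟩⟩
    | succ k ih =>
      obtain ⟨w, hw⟩ := ih
      refine ⟨omegaMap T i₀ j₀ w, ?_⟩
      rw [Function.iterate_succ_apply']
      exact Set.mem_iUnion.2 ⟨i₀, Set.mem_iUnion.2 ⟨j₀, Set.mem_iUnion.2 ⟨ht₀, ⟨w, hw, rfl⟩⟩⟩⟩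
  have hInterNe : (⋂ k : ℕ, W^[k] sq).Nonempty :=
    IsCompact.nonempty_iInter_of_sequence_nonempty_isCompact_isClosed _ hanti hWne
      (hWcompact 0) (fun k => (hWcompact k).isClosed)
  have hA : suppQ Q ⊆ ⋃ i, ⋃ j, ⋃ (_ : T i j ≠ 0), omegaMap T i j '' suppQ Q :=
    supp_subset_union hm T h1 h2 h3 Q hfix
  have hB : (⋃ i, ⋃ j, ⋃ (_ : T i j ≠ 0), omegaMap T i j '' suppQ Q) ⊆ suppQ Q := by
    refine Set.iUnion_subset fun i => Set.iUnion_subset fun j => Set.iUnion_subset fun ht => ?_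
    exact image_supp_subset hm T h1 h2 h3 Q hfix i j ht
  have hUnionEq : suppQ Q = ⋃ i, ⋃ j, ⋃ (_ : T i j ≠ 0), omegaMap T i j '' suppQ Q :=
    Set.Subset.antisymm hA hB
  have hsubk : ∀ k : ℕ, suppQ Q ⊆ W^[k] sq := by
    intro k
    induction k with
    | zero =>
      intro z hz
      simp only [Function.iterate_zero, id_eq]
      exact hz.1
    | succ k ih =>
      rw [Function.iterate_succ_apply']
      intro z hz
      have hz0 : z ∈ ⋃ i, ⋃ j, ⋃ (_ : T i j ≠ 0), omegaMap T i j '' suppQ Q := hUnionEq ▸ hz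
      have hz' : z ∈ W (suppQ Q) := by rw [hW]; exact hz0
      exact hWmono _ _ ih hz'
  have hInter : suppQ Q = ⋂ k : ℕ, W^[k] sq := by
    apply Set.Subset.antisymm (Set.subset_iInter hsubk)
    intro x hx
    have hxsq : x ∈ sq := by simpa using Set.mem_iInter.1 hx 0
    by_contra hns
    obtain ⟨ε, hε, hN⟩ := exists_nullAt_of_notMem Q hxsq hns
    obtain ⟨θ, hθ0, hθ1, hshr⟩ := shrink_lemma hm T h1 h2 h3 Q hQ hfix
    rw [← hW, ← hsq] at hshr
    obtain ⟨k, hk⟩ := exists_pow_lt_of_lt_one hε hθ1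
    obtain ⟨a, b, c, d, ha0, hax, hxb, hb1, hba, hc0, hcx, hxd, hd1, hdc, hvol⟩ :=
      hshr k x (Set.mem_iInter.1 hx k)
    exact hvol (hN a b c d (le_trans hax hxb) (le_trans hcx hxd) ha0 hb1 hc0 hd1
      (by linarith) (by linarith) (by linarith) (by linarith))
  refine ⟨?_, ?_, hUnionEq, hInter⟩
  · rw [hInter]; exact hInterNe
  · rw [hInter]
    exact IsCompact.of_isClosed_subset (hWcompact 0)
      (isClosed_iInter fun k => (hWcompact k).isClosed) (Set.iInter_subset _ 0)
end

section
/- Let n ≥ 2, T = (t_i) ∈ T_Q, and let α = max_i (Σ_{r ≤ i} |t_r| − Σ_{r ≤ i'} |t_r|), where r ≤ i means r_h ≤ i_h for all h and i' = (i₁−1,…,i_n−1). Then for any two n-quasi-copulas Q₁, Q₂, d(T(Q₁), T(Q₂)) ≤ α · d(Q₁, Q₂), where d is the supremum metric. -/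
open Set MeasureTheory
open scoped ENNReal

noncomputable section

/-- An `n`-quasi-copula on `[0,1]ⁿ`. -/
def IsNQuasiCopula (n : ℕ) (Q : (Fin n → ℝ) → ℝ) : Prop :=
  (∀ u : Fin n → ℝ, (∀ j, u j ∈ Icc (0:ℝ) 1) → Q u ∈ Icc (0:ℝ) 1) ∧
  (∀ u : Fin n → ℝ, (∀ j, u j ∈ Icc (0:ℝ) 1) → (∃ j, u j = 0) → Q u = 0) ∧
  (∀ u : Fin n → ℝ, (∀ j, u j ∈ Icc (0:ℝ) 1) → ∀ k, (∀ j, j ≠ k → u j = 1) → Q u = u k) ∧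
  (∀ u v : Fin n → ℝ, (∀ j, u j ∈ Icc (0:ℝ) 1) → (∀ j, v j ∈ Icc (0:ℝ) 1) →
    (∀ j, u j ≤ v j) → Q u ≤ Q v) ∧
  (∀ u v : Fin n → ℝ, (∀ j, u j ∈ Icc (0:ℝ) 1) → (∀ j, v j ∈ Icc (0:ℝ) 1) →
    |Q u - Q v| ≤ ∑ j, |u j - v j|)

/-- The `Q`-volume of the `n`-box `Π_j [lo j, hi j]`: the standard alternating-sign sum of
`Q` over the vertices of the box. -/
def nVol (n : ℕ) (Q : (Fin n → ℝ) → ℝ) (lo hi : Fin n → ℝ) : ℝ :=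
  ∑ ε : Fin n → Bool,
    (-1 : ℝ) ^ (Finset.univ.filter fun j => ε j = false).card *
      Q (fun j => if ε j then hi j else lo j)

/-- An `n`-copula: an `n`-quasi-copula all of whose box volumes are nonnegative. -/
def IsNCopula (n : ℕ) (Q : (Fin n → ℝ) → ℝ) : Prop :=
  IsNQuasiCopula n Q ∧
  ∀ lo hi : Fin n → ℝ,
    (∀ j, lo j ∈ Icc (0:ℝ) 1 ∧ hi j ∈ Icc (0:ℝ) 1 ∧ lo j ≤ hi j) → 0 ≤ nVol n Q lo hi

/-- The divisions `0 = a_{j,0} < a_{j,1} < ⋯ < a_{j,m_j} = 1` of `[0,1]`. -/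
def IsDivision (n : ℕ) (m : Fin n → ℕ) (a : Fin n → ℕ → ℝ) : Prop :=
  (∀ j, 1 ≤ m j) ∧ (∀ j, a j 0 = 0) ∧ (∀ j, a j (m j) = 1) ∧
  (∀ j, ∀ k, k < m j → a j k < a j (k + 1))

/-- `T ∈ T_Q`: the array `t` consists of the `B`-volumes of the boxes of the division, for
some `n`-quasi-copula `B`.  (Multi-indices are zero-based: the box of index `i` is
`Π_j [a_{j, i j}, a_{j, i j + 1}]`.) -/
def MemTQ (n : ℕ) (m : Fin n → ℕ) (a : Fin n → ℕ → ℝ)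
    (t : ((j : Fin n) → Fin (m j)) → ℝ) : Prop :=
  ∃ B : (Fin n → ℝ) → ℝ, IsNQuasiCopula n B ∧
    ∀ i : (j : Fin n) → Fin (m j),
      t i = nVol n B (fun j => a j (i j : ℕ)) (fun j => a j ((i j : ℕ) + 1))

/-- The `T`-transformation `T(Q)(u) = Σ_i t_i · Q(r_i(u))`. -/
def TApp (n : ℕ) (m : Fin n → ℕ) (a : Fin n → ℕ → ℝ)
    (t : ((j : Fin n) → Fin (m j)) → ℝ) (Q : (Fin n → ℝ) → ℝ) : (Fin n → ℝ) → ℝ :=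
  fun u => ∑ i : (j : Fin n) → Fin (m j),
    t i * Q (fun j =>
      max (min ((u j - a j (i j : ℕ)) / (a j ((i j : ℕ) + 1) - a j (i j : ℕ))) 1) 0)

/-- `Σ_{r ≤ i} |t_r| − Σ_{r ≤ i'} |t_r|`, where `r ≤ i` means `r_h ≤ i_h` for all `h` and
`i'` is obtained from `i` by decreasing every coordinate by one (empty sums are `0`). -/
def alphaTerm (n : ℕ) (m : Fin n → ℕ) (t : ((j : Fin n) → Fin (m j)) → ℝ)
    (i : (j : Fin n) → Fin (m j)) : ℝ :=
  (∑ r ∈ Finset.univ.filter (fun r : (j : Fin n) → Fin (m j) => ∀ h, r h ≤ i h), |t r|) -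
  (∑ r ∈ Finset.univ.filter (fun r : (j : Fin n) → Fin (m j) =>
      ∀ h, (r h : ℕ) < (i h : ℕ)), |t r|)

/-- An open `Q`-null box: an `n`-box `Π_j I_j` with each `I_j` a relatively open interval
of `[0,1]`, such that every closed `n`-box contained in it has zero `Q`-volume. -/
def NOpenQNull (n : ℕ) (Q : (Fin n → ℝ) → ℝ) (B : Set (Fin n → ℝ)) : Prop :=
  (∃ I : Fin n → Set ℝ, B = Set.pi Set.univ I ∧
    ∀ j, (I j).OrdConnected ∧ ∃ U : Set ℝ, IsOpen U ∧ I j = U ∩ Icc 0 1) ∧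
  ∀ lo hi : Fin n → ℝ, (∀ j, lo j ≤ hi j) → Set.Icc lo hi ⊆ B → nVol n Q lo hi = 0

/-- The support of an `n`-quasi-copula: the complement in `[0,1]ⁿ` of the union of all
open `Q`-null boxes. -/
def suppNQ (n : ℕ) (Q : (Fin n → ℝ) → ℝ) : Set (Fin n → ℝ) :=
  {u | ∀ j, u j ∈ Icc (0:ℝ) 1} \ ⋃₀ {B | NOpenQNull n Q B}

/-- A similarity of `ℝⁿ` with ratio `c ∈ (0,1)` (Euclidean distance). -/
def IsSimilarityN (n : ℕ) (c : ℝ) (S : (Fin n → ℝ) → (Fin n → ℝ)) : Prop :=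
  0 < c ∧ c < 1 ∧ ∀ x y : Fin n → ℝ,
    Real.sqrt (∑ j, (S x j - S y j) ^ 2) = c * Real.sqrt (∑ j, (x j - y j) ^ 2)

/-- A self-similar subset of `ℝⁿ`. -/
def IsSelfSimilarN (n : ℕ) (E : Set (Fin n → ℝ)) : Prop :=
  ∃ (k : ℕ) (S : Fin (k + 1) → (Fin n → ℝ) → (Fin n → ℝ)) (c : Fin (k + 1) → ℝ),
    (∀ j, IsSimilarityN n (c j) (S j)) ∧ E = ⋃ j, S j '' E

end

/-- Vertex function: `r_i(u)`. -/
noncomputable def vtx (n : ℕ) (m : Fin n → ℕ) (a : Fin n → ℕ → ℝ) (u : Fin n → ℝ)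
    (i : (j : Fin n) → Fin (m j)) : Fin n → ℝ :=
  fun j => max (min ((u j - a j (i j : ℕ)) / (a j ((i j : ℕ) + 1) - a j (i j : ℕ))) 1) 0

lemma a_mono {n : ℕ} {m : Fin n → ℕ} {a : Fin n → ℕ → ℝ} (hdiv : IsDivision n m a)
    (j : Fin n) : ∀ {k l : ℕ}, k ≤ l → l ≤ m j → a j k ≤ a j l := by
  intro k l
  induction l with
  | zero => intro hkl _; have : k = 0 := Nat.le_zero.mp hkl; simp [this]
  | succ l ih =>
    intro hkl hl
    rcases Nat.lt_or_ge k (l + 1) with h | h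
    · exact le_trans (ih (Nat.lt_succ_iff.mp h) (by omega))
        (hdiv.2.2.2 j l (by omega)).le
    · have : k = l + 1 := le_antisymm hkl h
      simp [this]

lemma vtx_mem {n : ℕ} (m : Fin n → ℕ) (a : Fin n → ℕ → ℝ) (u : Fin n → ℝ)
    (i : (j : Fin n) → Fin (m j)) : ∀ j, vtx n m a u i j ∈ Icc (0:ℝ) 1 := by
  intro j
  constructor
  · exact le_max_right _ _
  · exact max_le (min_le_right _ _) zero_le_one

/-- For `T ∈ T_Q` and `α = max_i (Σ_{r ≤ i} |t_r| − Σ_{r ≤ i'} |t_r|)`,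
the `T`-transformation is `α`-Lipschitz for the sup metric:
`d(T(Q₁), T(Q₂)) ≤ α · d(Q₁, Q₂)` for all `n`-quasi-copulas `Q₁, Q₂`. -/
theorem TApp_contraction (n : ℕ) (hn : 2 ≤ n) (m : Fin n → ℕ) (a : Fin n → ℕ → ℝ)
    (hdiv : IsDivision n m a) (t : ((j : Fin n) → Fin (m j)) → ℝ)
    (hT : MemTQ n m a t) (α : ℝ)
    (hα : IsGreatest {x : ℝ | ∃ i : (j : Fin n) → Fin (m j), x = alphaTerm n m t i} α)
    (Q₁ Q₂ : (Fin n → ℝ) → ℝ) (hQ₁ : IsNQuasiCopula n Q₁) (hQ₂ : IsNQuasiCopula n Q₂) :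
    ∀ u : Fin n → ℝ, (∀ j, u j ∈ Icc (0:ℝ) 1) →
      |TApp n m a t Q₁ u - TApp n m a t Q₂ u| ≤
        α * sSup {x : ℝ | ∃ v : Fin n → ℝ, (∀ j, v j ∈ Icc (0:ℝ) 1) ∧ x = |Q₁ v - Q₂ v|} := by
  classical
  obtain ⟨hα_mem, hα_ub⟩ := hα
  set S : Set ℝ := {x : ℝ | ∃ v : Fin n → ℝ, (∀ j, v j ∈ Icc (0:ℝ) 1) ∧ x = |Q₁ v - Q₂ v|}
    with hS
  have h01 : ∀ j : Fin n, (0:ℝ) ∈ Icc (0:ℝ) 1 := fun _ => ⟨le_refl _, zero_le_one⟩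
  have hmem0 : |Q₁ (fun _ => 0) - Q₂ (fun _ => 0)| ∈ S :=
    ⟨fun _ => 0, fun j => h01 j, rfl⟩
  have hSbdd : BddAbove S := by
    refine ⟨2, fun x hx => ?_⟩
    obtain ⟨v, hv, rfl⟩ := hx
    have h1 := hQ₁.1 v hv
    have h2 := hQ₂.1 v hv
    have := abs_sub_abs_le_abs_sub (Q₁ v) (Q₂ v)
    calc |Q₁ v - Q₂ v| ≤ |Q₁ v| + |Q₂ v| := abs_sub _ _
      _ ≤ 1 + 1 := by
          gcongr
          · exact abs_le.mpr ⟨by linarith [h1.1], h1.2⟩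
          · exact abs_le.mpr ⟨by linarith [h2.1], h2.2⟩
      _ = 2 := by norm_num
  set d : ℝ := sSup S with hd
  have hd0 : (0:ℝ) ≤ d := le_trans (abs_nonneg _) (le_csSup hSbdd hmem0)
  have hα0 : (0:ℝ) ≤ α := by
    obtain ⟨i₀, hi₀⟩ := hα_mem
    rw [hi₀]
    unfold alphaTerm
    refine sub_nonneg.mpr (Finset.sum_le_sum_of_subset_of_nonneg ?_ ?_)
    · intro r hr
      simp only [Finset.mem_filter, Finset.mem_univ, true_and] at hr ⊢
      intro h
      exact le_of_lt (hr h)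
    · intro r _ _; exact abs_nonneg _
  intro u hu
  have hdiff : TApp n m a t Q₁ u - TApp n m a t Q₂ u
      = ∑ i : (j : Fin n) → Fin (m j), t i * (Q₁ (vtx n m a u i) - Q₂ (vtx n m a u i)) := by
    show (∑ i : (j : Fin n) → Fin (m j), t i * Q₁ (vtx n m a u i))
        - (∑ i : (j : Fin n) → Fin (m j), t i * Q₂ (vtx n m a u i)) = _
    rw [← Finset.sum_sub_distrib]
    exact Finset.sum_congr rfl fun i _ => (mul_sub _ _ _).symm
  have hDle : ∀ i : (j : Fin n) → Fin (m j),
      |Q₁ (vtx n m a u i) - Q₂ (vtx n m a u i)| ≤ d :=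
    fun i => le_csSup hSbdd ⟨vtx n m a u i, vtx_mem m a u i, rfl⟩
  have hΔpos : ∀ (j : Fin n) (k : ℕ), k < m j → 0 < a j (k + 1) - a j k :=
    fun j k hk => sub_pos.mpr (hdiv.2.2.2 j k hk)
  -- a coordinate of the vertex is 0 whenever `u j ≤ a j (i j)`
  have hvzero : ∀ (i : (j : Fin n) → Fin (m j)) (j : Fin n), u j ≤ a j (i j : ℕ) →
      vtx n m a u i j = 0 := by
    intro i j hle
    have hden := hΔpos j (i j) (i j).isLt
    have hratio : (u j - a j (i j : ℕ)) / (a j ((i j : ℕ) + 1) - a j (i j : ℕ)) ≤ 0 :=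
      div_nonpos_iff.mpr (Or.inr ⟨by linarith, hden.le⟩)
    unfold vtx
    have : min ((u j - a j (i j : ℕ)) / (a j ((i j : ℕ) + 1) - a j (i j : ℕ))) 1 ≤ 0 :=
      le_trans (min_le_left _ _) hratio
    exact max_eq_right this
  -- Q₁ - Q₂ vanishes when some vertex coordinate is 0
  have hDzero : ∀ (i : (j : Fin n) → Fin (m j)) (j : Fin n), vtx n m a u i j = 0 →
      Q₁ (vtx n m a u i) - Q₂ (vtx n m a u i) = 0 := by
    intro i j hj
    rw [hQ₁.2.1 _ (vtx_mem m a u i) ⟨j, hj⟩, hQ₂.2.1 _ (vtx_mem m a u i) ⟨j, hj⟩, sub_zero]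
  have key : |∑ i : (j : Fin n) → Fin (m j),
      t i * (Q₁ (vtx n m a u i) - Q₂ (vtx n m a u i))| ≤ α * d := by
    by_cases hpos : ∀ j, 0 < u j
    · -- the maximal index K
      have hfilne : ∀ j : Fin n, ((Finset.range (m j)).filter fun k => a j k < u j).Nonempty := by
        intro j
        exact ⟨0, Finset.mem_filter.mpr ⟨Finset.mem_range.mpr (hdiv.1 j),
          by rw [hdiv.2.1 j]; exact hpos j⟩⟩
      set K : ∀ j : Fin n, ℕ := fun j =>
        (((Finset.range (m j)).filter fun k => a j k < u j).max' (hfilne j)) with hK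
      have hKmem : ∀ j, K j ∈ (Finset.range (m j)).filter fun k => a j k < u j :=
        fun j => Finset.max'_mem _ _
      have hKlt : ∀ j, K j < m j := fun j => Finset.mem_range.mp (Finset.mem_filter.mp (hKmem j)).1
      have hKa : ∀ j, a j (K j) < u j := fun j => (Finset.mem_filter.mp (hKmem j)).2
      have hKmax : ∀ j k, k < m j → a j k < u j → k ≤ K j := by
        intro j k hk hak
        exact Finset.le_max' _ k (Finset.mem_filter.mpr ⟨Finset.mem_range.mpr hk, hak⟩)
      have hKup : ∀ j, u j ≤ a j (K j + 1) := by
        intro j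
        by_cases h : K j + 1 = m j
        · rw [h, hdiv.2.2.1 j]; exact (hu j).2
        · by_contra hcon
          push_neg at hcon
          exact absurd (hKmax j (K j + 1) (by have := hKlt j; omega) hcon) (by omega)
      set Kf : (j : Fin n) → Fin (m j) := fun j => ⟨K j, hKlt j⟩ with hKf
      -- indices not ≤ Kf give zero
      have hout : ∀ i : (j : Fin n) → Fin (m j), ¬(∀ h, i h ≤ Kf h) →
          Q₁ (vtx n m a u i) - Q₂ (vtx n m a u i) = 0 := by
        intro i hi
        push_neg at hi
        obtain ⟨j, hj⟩ := hi
        have hji : K j < (i j : ℕ) := by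
          exact Fin.lt_def.mp hj
        have : a j (K j + 1) ≤ a j (i j : ℕ) := a_mono hdiv j (by omega) (i j).isLt.le
        exact hDzero i j (hvzero i j (le_trans (hKup j) this))
      -- indices strictly below Kf give the all-ones vertex, hence zero
      have hin : ∀ i : (j : Fin n) → Fin (m j), (∀ h, ((i h : ℕ) < (Kf h : ℕ))) →
          Q₁ (vtx n m a u i) - Q₂ (vtx n m a u i) = 0 := by
        intro i hi
        have hone : vtx n m a u i = fun _ => 1 := by
          funext j
          have hij : (i j : ℕ) + 1 ≤ K j := hi j
          have h1 : a j ((i j : ℕ) + 1) ≤ a j (K j) := a_mono hdiv j hij (hKlt j).le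
          have hden := hΔpos j (i j) (i j).isLt
          have hge : (1:ℝ) ≤ (u j - a j (i j : ℕ)) / (a j ((i j : ℕ) + 1) - a j (i j : ℕ)) := by
            rw [le_div_iff₀ hden]
            have := hKa j
            linarith
          unfold vtx
          rw [min_eq_right hge]
          exact max_eq_left zero_le_one
        have k0 : Fin n := ⟨0, by omega⟩
        have e1 : Q₁ (vtx n m a u i) = 1 := by
          rw [hone]
          exact hQ₁.2.2.1 _ (fun j => ⟨zero_le_one, le_refl _⟩) k0 (fun j _ => rfl)
        have e2 : Q₂ (vtx n m a u i) = 1 := by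
          rw [hone]
          exact hQ₂.2.2.1 _ (fun j => ⟨zero_le_one, le_refl _⟩) k0 (fun j _ => rfl)
        rw [e1, e2, sub_self]
      -- now estimate
      set A : Finset ((j : Fin n) → Fin (m j)) :=
        Finset.univ.filter (fun r : (j : Fin n) → Fin (m j) => ∀ h, r h ≤ Kf h) with hA
      set B : Finset ((j : Fin n) → Fin (m j)) :=
        Finset.univ.filter (fun r : (j : Fin n) → Fin (m j) =>
          ∀ h, (r h : ℕ) < (Kf h : ℕ)) with hB
      have hBA : B ⊆ A := by
        intro r hr
        simp only [hA, hB, Finset.mem_filter, Finset.mem_univ, true_and] at hr ⊢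
        intro h
        exact Fin.le_def.mpr (le_of_lt (hr h))
      calc |∑ i : (j : Fin n) → Fin (m j),
              t i * (Q₁ (vtx n m a u i) - Q₂ (vtx n m a u i))|
          = |∑ i ∈ A \ B, t i * (Q₁ (vtx n m a u i) - Q₂ (vtx n m a u i))| := by
            congr 1
            rw [eq_comm]
            apply Finset.sum_subset (Finset.subset_univ _)
            intro i _ hiAB
            by_cases hiA : i ∈ A
            · have hiB : i ∈ B := by
                by_contra hiB
                exact hiAB (Finset.mem_sdiff.mpr ⟨hiA, hiB⟩)
              have := hin i (by simpa [hB, Finset.mem_filter] using hiB)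
              rw [this, mul_zero]
            · have := hout i (by simpa [hA, Finset.mem_filter] using hiA)
              rw [this, mul_zero]
        _ ≤ ∑ i ∈ A \ B, |t i| * |Q₁ (vtx n m a u i) - Q₂ (vtx n m a u i)| := by
            refine (Finset.abs_sum_le_sum_abs _ _).trans_eq ?_
            exact Finset.sum_congr rfl fun i _ => abs_mul _ _
        _ ≤ ∑ i ∈ A \ B, |t i| * d := by
            refine Finset.sum_le_sum fun i _ => ?_
            exact mul_le_mul_of_nonneg_left (hDle i) (abs_nonneg _)
        _ = (∑ i ∈ A \ B, |t i|) * d := by rw [Finset.sum_mul]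
        _ = alphaTerm n m t Kf * d := by
            congr 1
            rw [Finset.sum_sdiff_eq_sub hBA]
            rfl
        _ ≤ α * d := mul_le_mul_of_nonneg_right (hα_ub ⟨Kf, rfl⟩) hd0
    · -- some coordinate of u is 0: everything vanishes
      push_neg at hpos
      obtain ⟨j, hj⟩ := hpos
      have hj0 : u j = 0 := le_antisymm hj (hu j).1
      have hall : ∀ i : (j : Fin n) → Fin (m j),
          t i * (Q₁ (vtx n m a u i) - Q₂ (vtx n m a u i)) = 0 := by
        intro i
        have ha0 : (0:ℝ) ≤ a j (i j : ℕ) := by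
          have := a_mono hdiv j (Nat.zero_le (i j : ℕ)) (i j).isLt.le
          rwa [hdiv.2.1 j] at this
        have := hDzero i j (hvzero i j (by rw [hj0]; exact ha0))
        rw [this, mul_zero]
      rw [Finset.sum_congr rfl fun i _ => hall i]
      simp [mul_nonneg hα0 hd0]
  rw [hdiff]
  exact key
end
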